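/- Let g be a complex simple Lie algebra and p = l ⊕ u₊ the standard parabolic subalgebra associated to a subset S of the simple roots, with Levi factor l and nilradical u₊. If the nilradical u₊ is a simple l-module, then u₊ is an abelian Lie algebra. -/

import Mathlib

/-- Let `g` be a complex simple Lie algebra and `p = l ⊕ u₊` the standard parabolic
subalgebra associated to a subset of the simple roots, with Levi factor `l` and nilradical
`u₊` (so `u₊` is a nilpotent Lie algebra, is invariant under the adjoint action of `l`, and
is nonzero).  If `u₊` is a simple `l`-module (under the adjoint action), then `u₊` is an
abelian Lie algebra. -/
theorem stmt_4 {L : Type*} [LieRing L] [LieAlgebra ℂ L] [FiniteDimensional ℂ L]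
    [LieAlgebra.IsSimple ℂ L]
    (l u : LieSubalgebra ℂ L)
    [LieRing.IsNilpotent ↥u]
    (hlu : ∀ x ∈ l, ∀ y ∈ u, ⁅x, y⁆ ∈ u)
    (hne : u ≠ ⊥)
    (hsimple : ∀ W : Submodule ℂ L, W ≤ u.toSubmodule →
      (∀ x ∈ l, ∀ w ∈ W, ⁅x, w⁆ ∈ W) → W = ⊥ ∨ W = u.toSubmodule) :
    ∀ x ∈ u, ∀ y ∈ u, ⁅x, y⁆ = 0 := by
  set S : Set L := {z | ∃ a ∈ u, ∃ b ∈ u, ⁅a, b⁆ = z} with hS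
  set W : Submodule ℂ L := Submodule.span ℂ S with hW
  have hWle : W ≤ u.toSubmodule := by
    rw [hW, Submodule.span_le]
    rintro z ⟨a, ha, b, hb, rfl⟩
    exact u.lie_mem ha hb
  have hWinv : ∀ x ∈ l, ∀ w ∈ W, ⁅x, w⁆ ∈ W := by
    intro x hx w hw
    induction hw using Submodule.span_induction with
    | mem z hz =>
      obtain ⟨a, ha, b, hb, rfl⟩ := hz
      rw [leibniz_lie]
      exact add_mem (Submodule.subset_span ⟨_, hlu x hx a ha, b, hb, rfl⟩)
        (Submodule.subset_span ⟨a, ha, _, hlu x hx b hb, rfl⟩)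
    | zero => simp
    | add y z _ _ hy hz => rw [lie_add]; exact add_mem hy hz
    | smul c y _ hy => rw [lie_smul]; exact Submodule.smul_mem _ _ hy
  rcases hsimple W hWle hWinv with h | h
  · intro x hx y hy
    have : ⁅x, y⁆ ∈ W := Submodule.subset_span ⟨x, hx, y, hy, rfl⟩
    rw [h] at this
    simpa using this
  · exfalso
    -- the commutator ideal of u is ⊤
    have hD : ∀ z : ↥u, z ∈ (⁅(⊤ : LieIdeal ℂ ↥u), (⊤ : LieIdeal ℂ ↥u)⁆ : LieIdeal ℂ ↥u) := by
      intro z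
      have hz : (z : L) ∈ W := by rw [h]; exact z.2
      have key : ∀ y ∈ W, ∀ hy : y ∈ u, (⟨y, hy⟩ : ↥u) ∈
          (⁅(⊤ : LieIdeal ℂ ↥u), (⊤ : LieIdeal ℂ ↥u)⁆ : LieIdeal ℂ ↥u) := by
        intro y hyW
        induction hyW using Submodule.span_induction with
        | mem v hv =>
          intro hvu
          obtain ⟨a, ha, b, hb, rfl⟩ := hv
          have : (⟨⁅a, b⁆, hvu⟩ : ↥u) = ⁅(⟨a, ha⟩ : ↥u), (⟨b, hb⟩ : ↥u)⁆ := rfl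
          rw [this]
          exact LieSubmodule.lie_mem_lie (LieSubmodule.mem_top _) (LieSubmodule.mem_top _)
        | zero =>
          intro h0
          have : (⟨(0:L), h0⟩ : ↥u) = 0 := rfl
          rw [this]; exact zero_mem _
        | add y z hy hz ihy ihz =>
          intro hyz
          have hyu : y ∈ u := hWle hy
          have hzu : z ∈ u := hWle hz
          have : (⟨y + z, hyz⟩ : ↥u) = ⟨y, hyu⟩ + ⟨z, hzu⟩ := rfl
          rw [this]; exact add_mem (ihy hyu) (ihz hzu)
        | smul c y hy ihy =>
          intro hcy
          have hyu : y ∈ u := hWle hy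
          have : (⟨c • y, hcy⟩ : ↥u) = c • ⟨y, hyu⟩ := rfl
          rw [this]; exact Submodule.smul_mem _ _ (ihy hyu)
      have := key (z : L) hz z.2
      simpa using this
    have hDtop : (⁅(⊤ : LieIdeal ℂ ↥u), (⊤ : LieIdeal ℂ ↥u)⁆ : LieIdeal ℂ ↥u) = ⊤ := by
      ext z; simp [hD z]
    -- lower central series is always ⊤
    have hlcs : ∀ n, LieModule.lowerCentralSeries ℂ ↥u ↥u n = ⊤ := by
      intro n
      induction n with
      | zero => rfl
      | succ n ih =>
        rw [LieModule.lowerCentralSeries_succ, ih]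
        exact hDtop
    obtain ⟨k, hk⟩ : ∃ k, LieModule.lowerCentralSeries ℂ ↥u ↥u k = ⊥ :=
      LieModule.IsNilpotent.nilpotent ℂ ↥u ↥u
    rw [hlcs k] at hk
    apply hne
    rw [LieSubalgebra.eq_bot_iff]
    intro x hx
    have : (⟨x, hx⟩ : ↥u) ∈ (⊤ : LieIdeal ℂ ↥u) := trivial
    rw [hk] at this
    exact congrArg Subtype.val ((LieSubmodule.mem_bot _).mp this)
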